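/- arXiv:0907.0343 — 2 statements merged into one kernel-verified Lean document; each statement's English description precedes it below -/
import Mathlib

section
/- Let K be an uncountable field of cardinality m > ℵ₀ with transcendence basis {t_i : i < m} over its prime field K₀. Then there exists a valuation v on K₀(t_i : i < m) such that v(t_1) = 1 and v(t_j) > v(t_i) whenever j < i, and consequently the open balls B_i = {x : v(x - t_i) > 1} for i < m are pairwise disjoint. -/
/-- A valuation on `K` with unspecified value group. -/
structure ValuationOn (K : Type) [Field K] where
  Γ : Type
  [inst : LinearOrderedCommGroupWithZero Γ]
  v : @Valuation K Γ inst.toLinearOrderedCommMonoidWithZero _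

attribute [instance] ValuationOn.inst

noncomputable section AuxVDB

open Finsupp MvPolynomial

set_option linter.unusedSectionVars false

variable {ι : Type} [LinearOrder ι] {k : Type} [Field k]

/-- exponent of `t i` -/
def ggVDB (i : ι) : Lex (ι →₀ ℤ) := toLex (Finsupp.single i 1)

lemma ggVDB_pos (i : ι) : 0 < ggVDB i := by
  change Finsupp.Lex (· < ·) (· < ·) _ _
  refine ⟨i, fun d hd => ?_, ?_⟩
  · simp [ggVDB, Finsupp.single_apply, hd.ne']
  · simp [ggVDB]

lemma ggVDB_anti {i j : ι} (h : j < i) : ggVDB i < ggVDB j := by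
  change Finsupp.Lex (· < ·) (· < ·) _ _
  refine ⟨j, fun d hd => ?_, ?_⟩
  · simp [ggVDB, Finsupp.single_apply, hd.ne', (hd.trans h).ne']
  · simp [ggVDB, Finsupp.single_apply, h.ne']

/-- embedding of monomial exponents -/
def embVDB (m : ι →₀ ℕ) : Lex (ι →₀ ℤ) := toLex (m.mapRange Nat.cast Nat.cast_zero)

lemma embVDB_injective : Function.Injective (embVDB (ι := ι)) := fun a b h =>
  Finsupp.mapRange_injective _ Nat.cast_zero Nat.cast_injective (by exact h)

variable (k) in
def thetaVDB : MvPolynomial ι k →ₐ[k] HahnSeries (Lex (ι →₀ ℤ)) k :=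
  aeval fun i => (HahnSeries.single (ggVDB i) 1 : HahnSeries (Lex (ι →₀ ℤ)) k)

lemma prodVDB (m : ι →₀ ℕ) :
    (m.prod fun i n => (HahnSeries.single (ggVDB i) (1 : k)) ^ n)
      = HahnSeries.single (embVDB m) 1 := by
  induction m using Finsupp.induction with
  | zero => simp [embVDB, Finsupp.mapRange_zero]
  | single_add i n f hif hn ih =>
      rw [Finsupp.prod_add_index (by simp) (fun a _ b₁ b₂ => pow_add _ _ _),
        Finsupp.prod_single_index (by simp), ih, HahnSeries.single_pow, one_pow,
        HahnSeries.single_mul_single, one_mul]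
      have key : n • ggVDB i + embVDB f = embVDB (Finsupp.single i n + f) := by
        rw [embVDB, embVDB, Finsupp.mapRange_add (fun a b => by push_cast; ring),
          Finsupp.mapRange_single]
        show toLex (n • Finsupp.single i (1 : ℤ)) + toLex (f.mapRange Nat.cast Nat.cast_zero) = _
        rw [Finsupp.smul_single, nsmul_eq_mul, mul_one]
        rfl
      rw [key]

lemma thetaVDB_coeff (p : MvPolynomial ι k) (m : ι →₀ ℕ) :
    (thetaVDB k p).coeff (embVDB m) = MvPolynomial.coeff m p := by
  have h1 : ∀ m' : ι →₀ ℕ, ∀ c : k,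
      (thetaVDB k) (monomial m' c) = HahnSeries.single (embVDB m') c := by
    intro m' c
    rw [thetaVDB, aeval_monomial, prodVDB]
    rw [show (algebraMap k (HahnSeries (Lex (ι →₀ ℤ)) k)) c = HahnSeries.C c from rfl]
    rw [HahnSeries.C_apply, HahnSeries.single_mul_single, zero_add, mul_one]
  conv_lhs => rw [p.as_sum, map_sum]
  simp_rw [h1]
  rw [show ((∑ m' ∈ p.support,
        HahnSeries.single (embVDB m') (MvPolynomial.coeff m' p)).coeff (embVDB m))
      = ∑ m' ∈ p.support,
        (HahnSeries.single (embVDB m') (MvPolynomial.coeff m' p)).coeff (embVDB m) from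
    map_sum (HahnSeries.coeff.addMonoidHom (embVDB m)) _ _]
  by_cases hm : m ∈ p.support
  · rw [Finset.sum_eq_single_of_mem m hm]
    · simp
    · intro b _ hbm
      exact HahnSeries.coeff_single_of_ne (fun h => hbm (embVDB_injective h.symm))
  · rw [Finset.sum_eq_zero, eq_comm]
    · simpa using hm
    · intro b hb
      refine HahnSeries.coeff_single_of_ne (fun h => hm ?_)
      rwa [embVDB_injective h.symm] at hb

lemma div_lt_one_VDB {G : Type*} [LinearOrderedCommGroupWithZero G] {a b : G} (hb : b ≠ 0)
    (h : a / b < 1) : a < b := by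
  have h2 := mul_lt_mul_of_pos_left h (zero_lt_iff.2 hb)
  rwa [mul_one, mul_comm, div_mul_cancel₀ _ hb] at h2

lemma thetaVDB_injective : Function.Injective (thetaVDB k (ι := ι)) := by
  rw [injective_iff_map_eq_zero]
  intro p hp
  ext m
  rw [← thetaVDB_coeff p m, hp]
  simp

end AuxVDB

set_option maxHeartbeats 2000000 in
set_option synthInstance.maxHeartbeats 1000000 in
/-- Let `K` be an uncountable field of cardinality `m > ℵ₀` with a
transcendence basis `{t i : i : ι}` over its prime field, where `ι` is a well-ordered
index set of cardinality `m` with least element `i₁`.  Then there is a valuation `v` on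
`K` such that (multiplicatively written) `v (t i₁)` is a nonzero value `< 1`
(additively: `v(t_{i₁}) = 1 > 0`), `v (t j) < v (t i)` whenever `j < i`
(additively: `v(t_j) > v(t_i)`), and consequently the open balls
`B_i = {x : v (x - t i) < v (t i₁)}` (additively: `v(x - t_i) > 1`) are pairwise
disjoint. -/
theorem exists_valuation_disjoint_balls
    {K ι : Type} [Field K] [LinearOrder ι] [WellFoundedLT ι]
    (hbig : Cardinal.aleph0 < Cardinal.mk K) (hcard : Cardinal.mk ι = Cardinal.mk K)
    (t : ι → K) (hbasis : IsTranscendenceBasis (⊥ : Subfield K) t)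
    (i₁ : ι) (hleast : ∀ i, i₁ ≤ i) :
    ∃ w : ValuationOn K,
      w.v (t i₁) ≠ 0 ∧ w.v (t i₁) < 1 ∧
      (∀ i j : ι, j < i → w.v (t j) < w.v (t i)) ∧
      Pairwise fun i i' : ι =>
        Disjoint {x : K | w.v (x - t i) < w.v (t i₁)}
          {x : K | w.v (x - t i') < w.v (t i₁)} := by
  classical
  have halg : AlgebraicIndependent (⊥ : Subfield K) t := hbasis.1
  have hθ : Function.Injective
      ((thetaVDB (ι := ι) (⊥ : Subfield K)).toRingHom) := thetaVDB_injective
  have halg' : Function.Injective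
      ((MvPolynomial.aeval (R := (⊥ : Subfield K)) t).toRingHom) := halg
  set f₁ : FractionRing (MvPolynomial ι (⊥ : Subfield K)) →+* K :=
    IsFractionRing.lift halg' with hf₁
  set f₂ : FractionRing (MvPolynomial ι (⊥ : Subfield K)) →+*
      HahnSeries (Lex (ι →₀ ℤ)) (⊥ : Subfield K) := IsFractionRing.lift hθ with hf₂
  set vL : Valuation (HahnSeries (Lex (ι →₀ ℤ)) (⊥ : Subfield K))
      (Multiplicative (WithTop (Lex (ι →₀ ℤ)))ᵒᵈ) :=
    AddValuation.toValuation (HahnSeries.addVal (Lex (ι →₀ ℤ)) (⊥ : Subfield K)) with hvL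
  set vF : Valuation (FractionRing (MvPolynomial ι (⊥ : Subfield K)))
      (Multiplicative (WithTop (Lex (ι →₀ ℤ)))ᵒᵈ) := vL.comap f₂ with hvF
  set O : ValuationSubring (FractionRing (MvPolynomial ι (⊥ : Subfield K))) :=
    vF.valuationSubring with hO
  letI : IsLocalRing O.toSubring := inferInstanceAs (IsLocalRing O)
  set A : LocalSubring K := LocalSubring.mk (O.toSubring.map f₁) with hA
  obtain ⟨B, hle, hloc⟩ := A.exists_le_valuationSubring
  -- the key transfer lemma
  have hkey : ∀ q : FractionRing (MvPolynomial ι (⊥ : Subfield K)),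
      vL (f₂ q) < 1 → B.valuation (f₁ q) < 1 := by
    intro q hq
    have hqO : q ∈ O.toSubring := le_of_lt hq
    have hnu : ¬ IsUnit (⟨q, hqO⟩ : O.toSubring) := by
      intro h
      obtain ⟨z, hz⟩ := isUnit_iff_exists_inv.mp h
      have h1 : q * (z : FractionRing (MvPolynomial ι (⊥ : Subfield K))) = 1 := by
        simpa using Subtype.ext_iff.mp hz
      have h2 : vL (f₂ (z : FractionRing (MvPolynomial ι (⊥ : Subfield K)))) ≤ 1 := z.2
      have h3 : vL (f₂ q) * vL (f₂ (z : FractionRing (MvPolynomial ι (⊥ : Subfield K)))) = 1 := by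
        rw [← vL.map_mul, ← f₂.map_mul, h1, f₂.map_one, vL.map_one]
      have h4 : vL (f₂ q) * vL (f₂ (z : FractionRing (MvPolynomial ι (⊥ : Subfield K)))) < 1 :=
        lt_of_le_of_lt (mul_le_of_le_one_right' h2) hq
      exact absurd h3 h4.ne
    have hmem : f₁ q ∈ O.toSubring.map f₁ := ⟨q, hqO, rfl⟩
    have hnuA : ¬ IsUnit (⟨f₁ q, hmem⟩ : O.toSubring.map f₁) := by
      intro h
      apply hnu
      set e := O.toSubring.equivMapOfInjective f₁ f₁.injective with he
      have hee : e ⟨q, hqO⟩ = ⟨f₁ q, hmem⟩ :=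
        Subtype.ext (O.toSubring.coe_equivMapOfInjective_apply f₁ f₁.injective ⟨q, hqO⟩)
      have h5 := h.map e.symm
      rwa [← hee, RingEquiv.symm_apply_apply] at h5
    have hnuB : ¬ IsUnit (Subring.inclusion hle ⟨f₁ q, hmem⟩) := fun h =>
      hnuA (hloc.map_nonunit _ h)
    have hmemB : f₁ q ∈ B := hle hmem
    have hmm : (⟨f₁ q, hmemB⟩ : B) ∈ IsLocalRing.maximalIdeal B := hnuB
    exact (ValuationSubring.valuation_lt_one_iff B _).mp hmm
  -- values of generators
  have hX1 : ∀ i : ι, f₁ (algebraMap (MvPolynomial ι (⊥ : Subfield K))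
      (FractionRing (MvPolynomial ι (⊥ : Subfield K))) (MvPolynomial.X i)) = t i := by
    intro i
    rw [hf₁, IsFractionRing.lift_algebraMap]
    simp
  have hX2 : ∀ i : ι, f₂ (algebraMap (MvPolynomial ι (⊥ : Subfield K))
        (FractionRing (MvPolynomial ι (⊥ : Subfield K))) (MvPolynomial.X i))
      = HahnSeries.single (ggVDB i) 1 := by
    intro i
    rw [hf₂, IsFractionRing.lift_algebraMap]
    simp [thetaVDB]
  have horder : ∀ a : Lex (ι →₀ ℤ),
      (HahnSeries.addVal (Lex (ι →₀ ℤ)) (⊥ : Subfield K))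
        (HahnSeries.single a (1 : (⊥ : Subfield K))) = (a : WithTop (Lex (ι →₀ ℤ))) := by
    intro a
    rw [HahnSeries.addVal_apply_of_ne (HahnSeries.single_ne_zero one_ne_zero),
      HahnSeries.order_single one_ne_zero]
  have hvalx : ∀ x : HahnSeries (Lex (ι →₀ ℤ)) (⊥ : Subfield K),
      0 < (HahnSeries.addVal (Lex (ι →₀ ℤ)) (⊥ : Subfield K)) x → vL x < 1 := by
    intro x hx
    rw [hvL, AddValuation.toValuation_apply]
    show Multiplicative.ofAdd (OrderDual.toDual _)
      < Multiplicative.ofAdd (OrderDual.toDual (0 : WithTop (Lex (ι →₀ ℤ))))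
    exact Multiplicative.ofAdd_lt.2 (OrderDual.toDual_lt_toDual.2 hx)
  have hval : ∀ a : Lex (ι →₀ ℤ), 0 < a →
      vL (HahnSeries.single a (1 : (⊥ : Subfield K))) < 1 := by
    intro a ha
    refine hvalx _ ?_
    rw [horder]
    exact WithTop.coe_pos.2 ha
  have hti : ∀ i : ι, t i ≠ 0 := by
    intro i h
    have : MvPolynomial.aeval (R := (⊥ : Subfield K)) t (MvPolynomial.X i)
        = MvPolynomial.aeval (R := (⊥ : Subfield K)) t 0 := by simp [h]
    exact MvPolynomial.X_ne_zero i (halg this)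
  -- main estimates
  have h1lt : B.valuation (t i₁) < 1 := by
    have := hkey (algebraMap (MvPolynomial ι (⊥ : Subfield K))
        (FractionRing (MvPolynomial ι (⊥ : Subfield K))) (MvPolynomial.X i₁))
      (by rw [hX2]; exact hval _ (ggVDB_pos i₁))
    rwa [hX1] at this
  have hmono : ∀ i j : ι, j < i → B.valuation (t j) < B.valuation (t i) := by
    intro i j hji
    set q : FractionRing (MvPolynomial ι (⊥ : Subfield K)) :=
      algebraMap (MvPolynomial ι (⊥ : Subfield K))
        (FractionRing (MvPolynomial ι (⊥ : Subfield K))) (MvPolynomial.X j)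
      / algebraMap (MvPolynomial ι (⊥ : Subfield K))
        (FractionRing (MvPolynomial ι (⊥ : Subfield K))) (MvPolynomial.X i) with hqdef
    have hXine : algebraMap (MvPolynomial ι (⊥ : Subfield K))
        (FractionRing (MvPolynomial ι (⊥ : Subfield K))) (MvPolynomial.X i) ≠ 0 := fun h =>
      MvPolynomial.X_ne_zero i (IsFractionRing.to_map_eq_zero_iff.mp h)
    have hqe : q * algebraMap (MvPolynomial ι (⊥ : Subfield K))
        (FractionRing (MvPolynomial ι (⊥ : Subfield K))) (MvPolynomial.X i)
        = algebraMap (MvPolynomial ι (⊥ : Subfield K))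
        (FractionRing (MvPolynomial ι (⊥ : Subfield K))) (MvPolynomial.X j) :=
      div_mul_cancel₀ _ hXine
    have hfe : f₂ q * HahnSeries.single (ggVDB i) (1 : (⊥ : Subfield K))
        = HahnSeries.single (ggVDB j) (1 : (⊥ : Subfield K)) := by
      rw [← hX2, ← hX2, ← map_mul, hqe]
    have haddeq : (HahnSeries.addVal (Lex (ι →₀ ℤ)) (⊥ : Subfield K)) (f₂ q)
        + (ggVDB i : WithTop (Lex (ι →₀ ℤ))) = (ggVDB j : WithTop (Lex (ι →₀ ℤ))) := by
      rw [← horder (ggVDB i), ← horder (ggVDB j), ← AddValuation.map_mul, hfe]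
    have hpos : 0 < (HahnSeries.addVal (Lex (ι →₀ ℤ)) (⊥ : Subfield K)) (f₂ q) := by
      by_contra hnp
      push_neg at hnp
      have h10 := add_le_add_left hnp ((ggVDB i : WithTop (Lex (ι →₀ ℤ))))
      rw [haddeq, zero_add] at h10
      exact absurd h10 (not_le.2 (WithTop.coe_lt_coe.2 (ggVDB_anti hji)))
    have hlt := hkey q (hvalx _ hpos)
    have hte : f₁ q * t i = t j := by
      rw [← hX1 i, ← hX1 j, ← map_mul, hqe]
    have hvi : (0 : B.ValueGroup) < B.valuation (t i) :=
      zero_lt_iff.2 ((Valuation.ne_zero_iff _).2 (hti i))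
    have h11 := mul_lt_mul_of_pos_right hlt hvi
    rwa [one_mul, ← Valuation.map_mul, hte] at h11
  refine ⟨⟨B.ValueGroup, B.valuation⟩, (Valuation.ne_zero_iff _).2 (hti i₁), h1lt,
    fun i j h => hmono i j h, ?_⟩
  -- disjointness
  have hdisj : ∀ i i' : ι, i' < i →
      Disjoint {x : K | B.valuation (x - t i) < B.valuation (t i₁)}
        {x : K | B.valuation (x - t i') < B.valuation (t i₁)} := by
    intro i i' hi'i
    rw [Set.disjoint_left]
    intro x hx hx'
    have h3 : B.valuation (t i - t i') ≤
        max (B.valuation (x - t i')) (B.valuation (x - t i)) := by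
      have hxy : t i - t i' = (x - t i') - (x - t i) := by ring
      rw [hxy]
      exact Valuation.map_sub _ _ _
    have h4 : B.valuation (t i - t i') < B.valuation (t i₁) :=
      lt_of_le_of_lt h3 (max_lt hx' hx)
    have h6 : B.valuation (t i - t i') = B.valuation (t i) :=
      Valuation.map_sub_eq_of_lt_left _ (hmono i i' hi'i)
    have h7 : B.valuation (t i₁) ≤ B.valuation (t i) := by
      rcases (hleast i).lt_or_eq with h | h
      · exact (hmono i i₁ h).le
      · rw [h]
    rw [h6] at h4
    exact absurd h7 (not_le.2 h4)
  intro i i' hne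
  rcases hne.lt_or_gt with h | h
  · exact (hdisj i' i h).symm
  · exact hdisj i i' h
end

section
/- Let E be a field of characteristic p > 0 and F/E a Galois extension of degree p. Then there exists a₀ ∈ E such that for every a ∈ a₀ + {c^p − c : c ∈ E} and every x with x^p − x = a, one has F = E(x). -/
open IntermediateField Polynomial

/-- **Artin–Schreier theory.** Let `E` be a field of characteristic
`p > 0` and `F/E` a Galois extension of degree `p`.  Then there exists `a₀ ∈ E` such
that for every `a ∈ a₀ + {c^p - c : c ∈ E}` and every `x ∈ F` with `x^p - x = a`, one
has `F = E(x)`. -/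
theorem artinSchreier_generator
    (E F : Type) [Field E] [Field F] [Algebra E F] [IsGalois E F]
    (p : ℕ) [hp : Fact p.Prime] [CharP E p]
    (hdeg : Module.finrank E F = p) :
    ∃ a₀ : E, ∀ a : E, (∃ c : E, a = a₀ + (c ^ p - c)) →
      ∀ x : F, x ^ p - x = algebraMap E F a →
        IntermediateField.adjoin E {x} = ⊤ := by
  classical
  have hpos : 0 < p := hp.out.pos
  have hFD : FiniteDimensional E F :=
    FiniteDimensional.of_finrank_pos (hdeg ▸ hpos)
  have hinjEF : Function.Injective (algebraMap E F) := (algebraMap E F).injective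
  have hcharF : CharP F p := charP_of_injective_algebraMap hinjEF p
  have hcard : Fintype.card (F ≃ₐ[E] F) = p := by
    rw [← Nat.card_eq_fintype_card, IsGalois.card_aut_eq_finrank, hdeg]
  obtain ⟨σ, hσ1⟩ : ∃ σ : F ≃ₐ[E] F, σ ≠ 1 := by
    obtain ⟨σ, h⟩ :=
      Fintype.exists_ne_of_one_lt_card (α := F ≃ₐ[E] F)
        (by rw [hcard]; exact hp.out.one_lt) 1
    exact ⟨σ, h⟩
  have hgen : ∀ τ : F ≃ₐ[E] F, τ ∈ Submonoid.powers σ := fun τ =>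
    mem_powers_of_prime_card (by rw [Nat.card_eq_fintype_card, hcard]) hσ1
  -- anything fixed by σ lies in the base field
  have hfix : ∀ z : F, σ z = z → z ∈ (⊥ : IntermediateField E F) := by
    intro z hz
    have hpow : ∀ n : ℕ, (σ ^ n) z = z := by
      intro n
      induction n with
      | zero => simp
      | succ n ih => rw [pow_succ', AlgEquiv.mul_apply, ih, hz]
    rw [← OrderIso.map_bot IsGalois.intermediateFieldEquivSubgroup.symm]
    rintro ⟨τ, -⟩
    obtain ⟨n, rfl⟩ := hgen τ
    exact hpow n
  -- the additive Hilbert 90 step: find x with σ x = x + 1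
  set T : F →ₗ[E] F := σ.toLinearMap - 1 with hTdef
  have hTapp : ∀ z : F, T z = σ z - z := by
    intro z; simp [hTdef]
  have hcharEnd : CharP (Module.End E F) p :=
    charP_of_injective_algebraMap (algebraMap E (Module.End E F)).injective p
  have hTp : (T ^ p : Module.End E F) = 0 := by
    rw [hTdef, sub_pow_char_of_commute _ (Commute.one_right _), one_pow,
      ← AlgEquiv.pow_toLinearMap]
    rw [← hcard, pow_card_eq_one]
    simp
  have hone : ∃ w : F, T w = 1 := by
    by_contra hno
    push_neg at hno
    have step : ∀ y : F, (∃ w, T w = y) → y ≠ 0 → T y ≠ 0 := by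
      rintro y ⟨w, hw⟩ hy0 hTy
      have hzy : σ y = y := by
        have h := hTapp y; rw [hTy] at h; exact sub_eq_zero.mp h.symm
      obtain ⟨e, he⟩ := IntermediateField.mem_bot.mp (hfix y hzy)
      have he0 : e ≠ 0 := by rintro rfl; simp at he; exact hy0 he.symm
      apply hno (e⁻¹ • w)
      rw [map_smul, hw, ← he, Algebra.smul_def, ← map_mul, inv_mul_cancel₀ he0, map_one]
    have hTne : ∃ z : F, T z ≠ 0 := by
      by_contra h
      push_neg at h
      apply hσ1
      ext z
      have h2 := hTapp z
      rw [h z] at h2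
      simpa using sub_eq_zero.mp h2.symm
    obtain ⟨z0, hz0⟩ := hTne
    have claim : ∀ k : ℕ, (T ^ k) (T z0) ≠ 0 ∧ ∃ w, T w = (T ^ k) (T z0) := by
      intro k
      induction k with
      | zero => exact ⟨by simpa using hz0, z0, by simp⟩
      | succ k ih =>
        obtain ⟨hk, w, hw⟩ := ih
        have hs : (T ^ (k + 1)) (T z0) = T ((T ^ k) (T z0)) := by
          rw [pow_succ']; rfl
        refine ⟨?_, (T ^ k) (T z0), hs.symm⟩
        rw [hs]
        exact step _ ⟨w, hw⟩ hk
    have := (claim p).1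
    rw [hTp] at this
    simp at this
  obtain ⟨x, hx⟩ := hone
  have hσx : σ x = x + 1 := by
    have h := hTapp x; rw [hx] at h
    linear_combination -h
  -- x ^ p - x is fixed, hence comes from E
  have hfix0 : σ (x ^ p - x) = x ^ p - x := by
    rw [map_sub, map_pow, hσx, add_pow_char, one_pow]
    ring
  obtain ⟨a₀, ha₀⟩ := IntermediateField.mem_bot.mp (hfix _ hfix0)
  refine ⟨a₀, ?_⟩
  rintro a ⟨c, rfl⟩ x' hx'
  -- x' is not in the base field
  have hx'nb : x' ∉ (⊥ : IntermediateField E F) := by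
    intro hb
    obtain ⟨e, he⟩ := IntermediateField.mem_bot.mp hb
    set d : E := e - c with hd
    have ha₀d : a₀ = d ^ p - d := by
      have h2 : e ^ p - e = a₀ + (c ^ p - c) := by
        apply hinjEF
        rw [map_sub, map_pow, he, hx']
      rw [hd, sub_pow_char]
      linear_combination -h2
    set y : F := x - algebraMap E F d with hy
    have hy1 : σ y = y + 1 := by
      rw [hy, map_sub, hσx, AlgEquiv.commutes]; ring
    have hyp : y ^ p = y := by
      rw [hy, sub_pow_char]
      have hxp : x ^ p = x + algebraMap E F a₀ := by
        rw [ha₀]; ring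
      rw [hxp, ha₀d]
      push_cast [map_sub, map_pow]
      ring
    -- y is a root of X^p - X, whose roots are the images of ZMod p
    set ι : ZMod p →+* F := ZMod.castHom (dvd_refl p) F with hι
    have hιinj : Function.Injective ι := ι.injective
    set q : F[X] := X ^ p - X with hqdef
    have hq0 : q ≠ 0 := by
      intro h
      have := congrArg (fun r => Polynomial.coeff r p) h
      simp [hqdef, coeff_X, hp.out.ne_one, Ne.symm hp.out.ne_one] at this
    have hqdeg : q.natDegree ≤ p := by
      refine le_trans (natDegree_sub_le _ _) ?_
      simp only [natDegree_X_pow, natDegree_X, max_le_iff]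
      exact ⟨le_rfl, hpos⟩
    have hroot : ∀ k : ZMod p, ι k ∈ q.roots := by
      intro k
      rw [mem_roots hq0]
      simp only [hqdef, IsRoot, eval_sub, eval_pow, eval_X]
      rw [← map_pow, ZMod.pow_card]
      ring
    have hyroot : y ∈ q.roots := by
      rw [mem_roots hq0]
      simp only [hqdef, IsRoot, eval_sub, eval_pow, eval_X]
      rw [hyp]; ring
    have hsub : (Finset.univ.image ι) ⊆ q.roots.toFinset := by
      intro z hz
      obtain ⟨k, -, rfl⟩ := Finset.mem_image.mp hz
      exact Multiset.mem_toFinset.mpr (hroot k)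
    have hcard2 : q.roots.toFinset.card ≤ (Finset.univ.image ι).card := by
      rw [Finset.card_image_of_injective _ hιinj]
      simp only [Finset.card_univ, ZMod.card]
      exact le_trans (Multiset.toFinset_card_le _) (le_trans (card_roots' q) hqdeg)
    have heq : (Finset.univ.image ι) = q.roots.toFinset :=
      Finset.eq_of_subset_of_card_le hsub hcard2
    have hymem : y ∈ Finset.univ.image ι := by
      rw [heq]; exact Multiset.mem_toFinset.mpr hyroot
    obtain ⟨k, -, hk⟩ := Finset.mem_image.mp hymem
    have hσy : σ y = y := by
      rw [← hk]
      exact RingHom.congr_fun (RingHom.ext_zmod ((σ : F →+* F).comp ι) ι) k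
    rw [hy1] at hσy
    simp at hσy
  -- conclude: the degree of adjoin E {x'} divides p and is not 1
  have hx'mem : x' ∈ adjoin E {x'} := mem_adjoin_simple_self E x'
  have hdvd : Module.finrank E (adjoin E {x'}) ∣ p :=
    ⟨Module.finrank (adjoin E {x'}) F, by rw [← hdeg, Module.finrank_mul_finrank]⟩
  rcases (Nat.Prime.eq_one_or_self_of_dvd hp.out _ hdvd) with h1 | h1
  · exact absurd (IntermediateField.finrank_eq_one_iff.mp h1 ▸ hx'mem) hx'nb
  · refine IntermediateField.eq_of_le_of_finrank_eq le_top ?_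
    rw [h1, IntermediateField.finrank_top', hdeg]
end
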